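/- Let H be an odd cycle and G an H-critical graph. If v is a vertex of G of degree d ≥ 3 incident with d distinct strings with k_1, ..., k_d internal vertices respectively, then k_1 + ... + k_d ≤ (|V(H)| − 2)·d − |V(H)|. -/

import Mathlib

open SimpleGraph

set_option linter.unusedSectionVars false
set_option maxHeartbeats 1000000

/-- A graph `G` is `H`-critical if every proper subgraph of `G` admits a homomorphism
to `H`, but `G` itself does not. -/
def HCritical {V W : Type} (G : SimpleGraph V) (H : SimpleGraph W) : Prop :=
  ¬ Nonempty (G →g H) ∧ ∀ G' : G.Subgraph, G' ≠ ⊤ → Nonempty (G'.coe →g H)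

/-- A string in `G` is a path whose internal vertices all have degree 2 in `G`
and whose endpoints have degree at least 3. -/
def IsString {V : Type} [Fintype V] (G : SimpleGraph V) [DecidableRel G.Adj]
    {u v : V} (p : G.Walk u v) : Prop :=
  p.IsPath ∧ 3 ≤ G.degree u ∧ 3 ≤ G.degree v ∧
    ∀ w ∈ p.support, w ≠ u → w ≠ v → G.degree w = 2

section WalkLemmas

variable {V : Type} [Fintype V] [DecidableEq V] {G : SimpleGraph V} [DecidableRel G.Adj]

lemma getVert_mem_support {u v : V} (p : G.Walk u v) (i : ℕ) :
    p.getVert i ∈ p.support := by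
  rw [SimpleGraph.Walk.mem_support_iff_exists_getVert]
  rcases le_or_gt i p.length with h | h
  · exact ⟨i, rfl, h⟩
  · exact ⟨p.length, by rw [p.getVert_of_length_le h.le, p.getVert_length], le_rfl⟩

lemma getVert_inj {u v : V} {p : G.Walk u v} (hp : p.IsPath) :
    ∀ i j, i ≤ p.length → j ≤ p.length → p.getVert i = p.getVert j → i = j := by
  induction p with
  | nil => intro i j hi hj _; simp at hi hj; omega
  | cons h q ih =>
    rw [SimpleGraph.Walk.cons_isPath_iff] at hp
    intro i j hi hj hij
    match i, j with
    | 0, 0 => rfl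
    | 0, j+1 =>
      exfalso
      simp only [SimpleGraph.Walk.getVert_zero, SimpleGraph.Walk.getVert_cons_succ] at hij
      exact hp.2 (hij ▸ getVert_mem_support q j)
    | i+1, 0 =>
      exfalso
      simp only [SimpleGraph.Walk.getVert_zero, SimpleGraph.Walk.getVert_cons_succ] at hij
      exact hp.2 (hij.symm ▸ getVert_mem_support q i)
    | i+1, j+1 =>
      simp only [SimpleGraph.Walk.getVert_cons_succ] at hij
      simp only [SimpleGraph.Walk.length_cons] at hi hj
      exact congrArg Nat.succ (ih hp.1 i j (by omega) (by omega) hij)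

lemma two_nbrs {x a b : V} (hdeg : G.degree x = 2) (ha : G.Adj x a) (hb : G.Adj x b)
    (hab : a ≠ b) : ∀ y, G.Adj x y → y = a ∨ y = b := by
  intro y hy
  have hsub : ({a, b} : Finset V) ⊆ G.neighborFinset x := by
    intro z hz
    simp only [Finset.mem_insert, Finset.mem_singleton] at hz
    rcases hz with rfl | rfl <;> simp [SimpleGraph.mem_neighborFinset, ha, hb]
  have hcard : ({a, b} : Finset V).card = 2 := Finset.card_pair hab
  have : G.neighborFinset x = {a, b} :=
    (Finset.eq_of_subset_of_card_le hsub (by rw [hcard, ← hdeg]; rfl)).symm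
  have hy' : y ∈ G.neighborFinset x := by simp [SimpleGraph.mem_neighborFinset, hy]
  rw [this] at hy'
  simpa using hy'

/-- auxiliary, fuel-based version -/
lemma coincide_aux : ∀ (N : ℕ) {a b b' : V} (p : G.Walk a b) (q : G.Walk a b'),
    p.length ≤ N →
    p.IsPath → q.IsPath → 3 ≤ G.degree b → 3 ≤ G.degree b' →
    (∀ x ∈ p.support, x ≠ a → x ≠ b → G.degree x = 2) →
    (∀ x ∈ q.support, x ≠ a → x ≠ b' → G.degree x = 2) →
    1 ≤ p.length → 1 ≤ q.length →
    p.getVert 1 = q.getVert 1 → p.support = q.support := by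
  intro N
  induction N with
  | zero => intro a b b' p q hN _ _ _ _ _ _ hl; omega
  | succ N IH =>
  intro a b b' p q hN hp hq hb hb' hip hiq hl hl' h2
  cases p with
  | nil => simp at hl
  | cons hadj p' =>
  cases q with
  | nil => simp at hl'
  | cons hadj' q' =>
  rename_i x x'
  rw [SimpleGraph.Walk.getVert_cons _ _ one_ne_zero, SimpleGraph.Walk.getVert_cons _ _ one_ne_zero,
    Nat.sub_self, SimpleGraph.Walk.getVert_zero, SimpleGraph.Walk.getVert_zero] at h2
  subst h2
  rw [SimpleGraph.Walk.cons_isPath_iff] at hp hq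
  have hxa : x ≠ a := fun h => hp.2 (h ▸ p'.start_mem_support)
  rcases Nat.eq_zero_or_pos p'.length with hp0 | hp1
  · have hbx : b = x := by
      rw [← p'.getVert_zero]
      exact (p'.getVert_of_length_le (by omega)).symm
    rcases Nat.eq_zero_or_pos q'.length with hq0 | hq1
    · have hbx' : b' = x := by
        rw [← q'.getVert_zero]
        exact (q'.getVert_of_length_le (by omega)).symm
      subst hbx hbx'
      cases p' with
      | nil => cases q' with
        | nil => rfl
        | cons h q'' => simp at hq0
      | cons h p'' => simp at hp0
    · exfalso
      have hxb' : x ≠ b' := by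
        intro h
        have := getVert_inj hq.1 0 q'.length (by omega) le_rfl
          (by rw [q'.getVert_zero, q'.getVert_length, h])
        omega
      have : G.degree x = 2 := hiq x (by simp) hxa hxb'
      rw [hbx] at hb; omega
  · rcases Nat.eq_zero_or_pos q'.length with hq0 | hq1
    · exfalso
      have hbx' : b' = x := by
        rw [← q'.getVert_zero]
        exact (q'.getVert_of_length_le (by omega)).symm
      have hxb : x ≠ b := by
        intro h
        have := getVert_inj hp.1 0 p'.length (by omega) le_rfl
          (by rw [p'.getVert_zero, p'.getVert_length, h])
        omega
      have : G.degree x = 2 := hip x (by simp) hxa hxb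
      rw [hbx'] at hb'; omega
    · have hxb : x ≠ b := by
        intro h
        have := getVert_inj hp.1 0 p'.length (by omega) le_rfl
          (by rw [p'.getVert_zero, p'.getVert_length, h])
        omega
      have hdegx : G.degree x = 2 := hip x (by simp) hxa hxb
      set z := p'.getVert 1 with hz
      set z' := q'.getVert 1 with hz'
      have hadjz : G.Adj x z := by
        have := p'.adj_getVert_succ (i := 0) hp1
        rwa [p'.getVert_zero] at this
      have hadjz' : G.Adj x z' := by
        have := q'.adj_getVert_succ (i := 0) hq1
        rwa [q'.getVert_zero] at this
      have hza : z ≠ a := fun h => hp.2 (h ▸ getVert_mem_support p' 1)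
      have hz'a : z' ≠ a := fun h => hq.2 (h ▸ getVert_mem_support q' 1)
      have hzz' : z' = z := by
        rcases two_nbrs hdegx (hadj.symm) hadjz (Ne.symm hza) z' hadjz' with h | h
        · exact absurd h hz'a
        · exact h
      have hsup : p'.support = q'.support := by
        apply IH p' q' (by simp only [SimpleGraph.Walk.length_cons] at hN; omega) hp.1 hq.1 hb hb'
        · intro y hy hyx hyb
          exact hip y (by simp [hy]) (fun h => hp.2 (h ▸ hy)) hyb
        · intro y hy hyx hyb'
          exact hiq y (by simp [hy]) (fun h => hq.2 (h ▸ hy)) hyb'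
        · exact hp1
        · exact hq1
        · rw [← hz, ← hz', hzz']
      simp [SimpleGraph.Walk.support_cons, hsup]

lemma coincide {a b b' : V} (p : G.Walk a b) (q : G.Walk a b')
    (hp : p.IsPath) (hq : q.IsPath) (hb : 3 ≤ G.degree b) (hb' : 3 ≤ G.degree b')
    (hip : ∀ x ∈ p.support, x ≠ a → x ≠ b → G.degree x = 2)
    (hiq : ∀ x ∈ q.support, x ≠ a → x ≠ b' → G.degree x = 2)
    (hl : 1 ≤ p.length) (hl' : 1 ≤ q.length)
    (h2 : p.getVert 1 = q.getVert 1) : p.support = q.support :=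
  coincide_aux p.length p q le_rfl hp hq hb hb' hip hiq hl hl' h2

lemma walk_len_zero {u c : V} {P : G.Walk u c} (h : P.length = 0) : u = c := by
  rw [← P.getVert_zero]
  exact P.getVert_of_length_le (by omega)

lemma split_string {u c x : V} {P : G.Walk u c} (hP : P.IsPath) (hx : x ∈ P.support)
    (hxu : x ≠ u) (hxc : x ≠ c) :
    ∃ (r : G.Walk x u) (s : G.Walk x c),
      r.IsPath ∧ s.IsPath ∧ 1 ≤ r.length ∧ 1 ≤ s.length ∧
      (∀ y ∈ r.support, y ∈ P.support) ∧ (∀ y ∈ s.support, y ∈ P.support) ∧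
      (∀ y ∈ r.support, y ≠ x → y ≠ c) ∧
      (∀ y ∈ s.support, y ≠ x → y ≠ u) ∧
      r.getVert 1 ≠ s.getVert 1 ∧
      r.support.reverse ++ s.support.tail = P.support := by
  set tk := P.takeUntil x hx with htk
  set dr := P.dropUntil x hx with hdr
  have hsp : tk.append dr = P := P.take_spec hx
  have hsupP : tk.support ++ dr.support.tail = P.support := by
    rw [← hsp, SimpleGraph.Walk.support_append]
  have hnd : (tk.support ++ dr.support.tail).Nodup := by
    rw [hsupP]; exact hP.support_nodup
  have hdisj : ∀ y, y ∈ tk.support → y ∈ dr.support.tail → False := by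
    intro y h1 h2
    exact (List.disjoint_of_nodup_append hnd) h1 h2
  have htkp : tk.IsPath := hP.takeUntil hx
  have hdrp : dr.IsPath := hP.dropUntil hx
  have htk1 : 1 ≤ tk.length := by
    by_contra h
    exact hxu (walk_len_zero (P := tk) (by omega)).symm
  have hdr1 : 1 ≤ dr.length := by
    by_contra h
    exact hxc (walk_len_zero (P := dr) (by omega))
  refine ⟨tk.reverse, dr, htkp.reverse, hdrp, by simpa using htk1, hdr1, ?_, ?_, ?_, ?_, ?_, ?_⟩
  · intro y hy
    rw [SimpleGraph.Walk.support_reverse, List.mem_reverse] at hy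
    exact P.support_takeUntil_subset hx hy
  · intro y hy
    exact P.support_dropUntil_subset hx hy
  · intro y hy hyx hyc
    rw [SimpleGraph.Walk.support_reverse, List.mem_reverse] at hy
    have hctail : c ∈ dr.support.tail := by
      have hcend : c ∈ dr.support := SimpleGraph.Walk.end_mem_support dr
      rw [SimpleGraph.Walk.support_eq_cons, List.mem_cons] at hcend
      rcases hcend with h | h
      · exact absurd h.symm hxc
      · exact h
    exact hdisj c (hyc ▸ hy) hctail
  · intro y hy hyx hyu
    have hutail : u ∈ dr.support.tail := by
      rw [SimpleGraph.Walk.support_eq_cons, List.mem_cons] at hy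
      rcases hy with h | h
      · exact absurd h hyx
      · exact hyu ▸ h
    exact hdisj u (SimpleGraph.Walk.start_mem_support tk) hutail
  · intro heq
    set r := tk.reverse with hr
    have hrp : r.IsPath := htkp.reverse
    have hr1mem : r.getVert 1 ∈ tk.support := by
      have := getVert_mem_support r 1
      rwa [SimpleGraph.Walk.support_reverse, List.mem_reverse] at this
    have hs1x : dr.getVert 1 ≠ x := by
      intro h
      have := getVert_inj hdrp 1 0 (by omega) (by omega) (by rw [h, dr.getVert_zero])
      omega
    have hs1tail : dr.getVert 1 ∈ dr.support.tail := by
      have hmem := getVert_mem_support dr 1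
      rw [SimpleGraph.Walk.support_eq_cons, List.mem_cons] at hmem
      rcases hmem with h | h
      · exact absurd h hs1x
      · exact h
    rw [heq] at hr1mem
    exact hdisj _ hr1mem hs1tail
  · rw [SimpleGraph.Walk.support_reverse, List.reverse_reverse]
    exact hsupP

lemma internal_degree_two {u c : V} {P : G.Walk u c} (h : P.IsPath)
    (hcond : ∀ x ∈ P.support, x ≠ u → x ≠ c → G.degree x = 2)
    {t : ℕ} (ht1 : 1 ≤ t) (ht2 : t < P.length) : G.degree (P.getVert t) = 2 := by
  apply hcond _ (getVert_mem_support P t)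
  · intro he
    have := getVert_inj h t 0 (by omega) (by omega) (by rw [he, P.getVert_zero])
    omega
  · intro he
    have := getVert_inj h t P.length (by omega) le_rfl (by rw [he, P.getVert_length])
    omega

lemma internal_nbrs {u c : V} {P : G.Walk u c} (h : P.IsPath) {t : ℕ}
    (hdeg2 : G.degree (P.getVert t) = 2) (ht1 : 1 ≤ t) (ht2 : t < P.length) :
    ∀ y, G.Adj (P.getVert t) y → y = P.getVert (t - 1) ∨ y = P.getVert (t + 1) := by
  have hprev : G.Adj (P.getVert (t - 1)) (P.getVert t) := by
    have := P.adj_getVert_succ (i := t - 1) (by omega)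
    rwa [show t - 1 + 1 = t by omega] at this
  have hnext : G.Adj (P.getVert t) (P.getVert (t + 1)) := P.adj_getVert_succ ht2
  have hne : P.getVert (t - 1) ≠ P.getVert (t + 1) := by
    intro he
    have := getVert_inj h (t - 1) (t + 1) (by omega) (by omega) he
    omega
  exact two_nbrs hdeg2 hprev.symm hnext hne

lemma glue {n : ℕ} {v : V} {d : ℕ} {w : Fin d → V} {p : ∀ i : Fin d, G.Walk v (w i)}
    (hstr : ∀ i, (p i).IsPath ∧
      ∀ x ∈ (p i).support, x ≠ v → x ≠ w i → G.degree x = 2)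
    (k : Fin d → ℕ) (hk : ∀ i, (p i).length = k i + 1)
    (T : Finset (Fin d)) (f : V → Fin n)
    (h2 : ∀ i ∈ T, ∀ t, t < (p i).length →
      (cycleGraph n).Adj (f ((p i).getVert t)) (f ((p i).getVert (t + 1))))
    (h1 : ∀ ⦃x y⦄, G.Adj x y →
      (∀ i ∈ T, ¬ ∃ t, 1 ≤ t ∧ t ≤ k i ∧ (p i).getVert t = x) →
      (∀ i ∈ T, ¬ ∃ t, 1 ≤ t ∧ t ≤ k i ∧ (p i).getVert t = y) →
      (cycleGraph n).Adj (f x) (f y)) :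
    Nonempty (G →g cycleGraph n) := by
  have key : ∀ ⦃x y : V⦄, G.Adj x y →
      (∃ i ∈ T, ∃ t, 1 ≤ t ∧ t ≤ k i ∧ (p i).getVert t = x) →
      (cycleGraph n).Adj (f x) (f y) := by
    rintro x y hadj ⟨i, hiT, t, ht1, ht2, rfl⟩
    have hdeg2 : G.degree ((p i).getVert t) = 2 :=
      internal_degree_two (hstr i).1 (hstr i).2 ht1 (by rw [hk i]; omega)
    rcases internal_nbrs (hstr i).1 hdeg2 ht1 (by rw [hk i]; omega) y hadj with rfl | rfl
    · have := h2 i hiT (t - 1) (by rw [hk i]; omega)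
      rw [show t - 1 + 1 = t by omega] at this
      exact this.symm
    · exact h2 i hiT t (by rw [hk i]; omega)
  refine ⟨⟨f, ?_⟩⟩
  intro x y hadj
  by_cases hx : ∃ i ∈ T, ∃ t, 1 ≤ t ∧ t ≤ k i ∧ (p i).getVert t = x
  · exact key hadj hx
  · by_cases hy : ∃ i ∈ T, ∃ t, 1 ≤ t ∧ t ≤ k i ∧ (p i).getVert t = y
    · exact (key hadj.symm hy).symm
    · push_neg at hx hy
      exact h1 hadj (by simpa using hx) (by simpa using hy)

end WalkLemmas

lemma exists_partial_hom {V W : Type} (G : SimpleGraph V) (H : SimpleGraph W)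
    (hcrit : HCritical G H) (S : Set V) (x0 : V) (hx0 : x0 ∉ S) (w0 : W) :
    ∃ f : V → W, ∀ ⦃x y⦄, G.Adj x y → x ∈ S → y ∈ S → H.Adj (f x) (f y) := by
  set G' : G.Subgraph :=
    { verts := S
      Adj := fun a b => G.Adj a b ∧ a ∈ S ∧ b ∈ S
      adj_sub := fun h => h.1
      edge_vert := fun h => h.2.1
      symm := ⟨fun a b h => ⟨h.1.symm, h.2.2, h.2.1⟩⟩ } with hG'
  have hne : G' ≠ ⊤ := by
    intro h
    apply hx0
    have : G'.verts = (⊤ : G.Subgraph).verts := by rw [h]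
    rw [SimpleGraph.Subgraph.verts_top] at this
    have : S = Set.univ := this
    simp [this]
  classical
  obtain ⟨ψ⟩ := hcrit.2 G' hne
  refine ⟨fun x => if h : x ∈ S then ψ ⟨x, h⟩ else w0, ?_⟩
  intro x y hadj hx hy
  simp only [hx, hy, dif_pos]
  have hcoe : G'.coe.Adj ⟨x, hx⟩ ⟨y, hy⟩ := by
    rw [SimpleGraph.Subgraph.coe_adj]
    exact ⟨hadj, hx, hy⟩
  exact ψ.map_adj hcoe

section CycleLemmas

open scoped Fin.NatCast Fin.CommRing

lemma cycle_adj_succ {n : ℕ} [NeZero n] (h3 : 3 ≤ n) (a : Fin n) :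
    (cycleGraph n).Adj a (a + 1) := by
  rw [cycleGraph_adj']
  right
  rw [show a + 1 - a = 1 by ring, Fin.val_one', Nat.mod_eq_of_lt (by omega)]

lemma cycle_adj_pred {n : ℕ} [NeZero n] (h3 : 3 ≤ n) (a : Fin n) :
    (cycleGraph n).Adj a (a - 1) := by
  rw [cycleGraph_adj']
  left
  rw [show a - (a - 1) = 1 by ring, Fin.val_one', Nat.mod_eq_of_lt (by omega)]

lemma exists_cycle_walk {n : ℕ} [NeZero n] (h3 : 3 ≤ n) :
    ∀ (L j : ℕ), j ≤ L → ∀ a : Fin n,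
      ∃ W : (cycleGraph n).Walk a (a + (L : Fin n) - ((2 * j : ℕ) : Fin n)), W.length = L := by
  intro L
  induction L with
  | zero =>
    intro j hj a
    interval_cases j
    exact ⟨SimpleGraph.Walk.nil.copy rfl (by push_cast; ring), by simp⟩
  | succ L IH =>
    intro j hj a
    cases j with
    | zero =>
      obtain ⟨W', hW'⟩ := IH 0 (by omega) (a + 1)
      refine ⟨(W'.cons (cycle_adj_succ h3 a)).copy rfl (by push_cast; ring), by simp [hW']⟩
    | succ j' =>
      obtain ⟨W', hW'⟩ := IH j' (by omega) (a - 1)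
      refine ⟨(W'.cons (cycle_adj_pred h3 a)).copy rfl (by push_cast; ring), by simp [hW']⟩

/-- The set of starting points from which `b` can be reached by a walk of length `L`. -/
def goodSet (n : ℕ) [NeZero n] (b : Fin n) (L : ℕ) : Finset (Fin n) :=
  (Finset.range (min n (L + 1))).image (fun j => b - (L : Fin n) + ((2 * j : ℕ) : Fin n))

lemma goodSet_card {n : ℕ} [NeZero n] (hodd : Odd n) (b : Fin n) (L : ℕ) :
    (goodSet n b L).card = min n (L + 1) := by
  rw [goodSet, Finset.card_image_of_injOn, Finset.card_range]
  intro j hj j' hj' h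
  simp only [Finset.coe_range, Set.mem_Iio] at hj hj'
  simp only at h
  have h2 : ((2 * j : ℕ) : Fin n) = ((2 * j' : ℕ) : Fin n) := add_left_cancel h
  have hmod : 2 * j ≡ 2 * j' [MOD n] := by
    have := congrArg Fin.val h2
    simp only [Fin.val_natCast] at this
    exact this
  have hcop : Nat.gcd n 2 = 1 := Nat.Coprime.gcd_eq_one (Odd.coprime_two_right hodd)
  have hj2 : j ≡ j' [MOD n] := Nat.ModEq.cancel_left_of_coprime hcop hmod
  have : j % n = j' % n := hj2
  rw [Nat.mod_eq_of_lt (by omega), Nat.mod_eq_of_lt (by omega)] at this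
  exact this

lemma goodSet_spec {n : ℕ} [NeZero n] (h3 : 3 ≤ n) {b : Fin n} {L : ℕ} {a : Fin n}
    (ha : a ∈ goodSet n b L) :
    ∃ W : (cycleGraph n).Walk a b, W.length = L := by
  rw [goodSet, Finset.mem_image] at ha
  obtain ⟨j, hj, rfl⟩ := ha
  rw [Finset.mem_range] at hj
  obtain ⟨W, hW⟩ := exists_cycle_walk h3 L j (by omega) (b - (L : Fin n) + ((2 * j : ℕ) : Fin n))
  exact ⟨W.copy rfl (by push_cast; ring), by simp [hW]⟩

lemma goodSet_full {n : ℕ} [NeZero n] (hodd : Odd n) {L : ℕ} (hL : n - 1 ≤ L) (b : Fin n) :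
    goodSet n b L = Finset.univ := by
  apply Finset.eq_univ_of_card
  rw [goodSet_card hodd, Fintype.card_fin]
  have : 0 < n := Nat.pos_of_ne_zero (NeZero.ne n)
  omega

end CycleLemmas

/-- Let `H = C_n` be an odd cycle and `G` an `H`-critical graph.  If `v`
is a vertex of degree `d ≥ 3` incident with `d` distinct strings having
`k 0, ..., k (d-1)` internal vertices respectively, then
`∑ i, k i ≤ (n - 2) * d - n`. -/
theorem weight_bound (n : ℕ) (hodd : Odd n) (h3 : 3 ≤ n)
    {V : Type} [Fintype V] (G : SimpleGraph V) [DecidableRel G.Adj]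
    (hcrit : HCritical G (cycleGraph n))
    (v : V) (d : ℕ) (hd : 3 ≤ d) (hdeg : G.degree v = d)
    (w : Fin d → V) (p : ∀ i : Fin d, G.Walk v (w i))
    (hstr : ∀ i, IsString G (p i))
    (hdist : ∀ i j, i ≠ j → (p i).support ≠ (p j).support)
    (k : Fin d → ℕ) (hk : ∀ i, (p i).length = k i + 1) :
    (∑ i, (k i : ℤ)) ≤ (n - 2) * d - n := by
  classical
  have hNZ : NeZero n := ⟨by omega⟩
  have hpath : ∀ i, (p i).IsPath := fun i => (hstr i).1
  have hcond : ∀ i, ∀ x ∈ (p i).support, x ≠ v → x ≠ w i → G.degree x = 2 :=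
    fun i => (hstr i).2.2.2
  have hdegw : ∀ i, 3 ≤ G.degree (w i) := fun i => (hstr i).2.2.1
  have hdegv : 3 ≤ G.degree v := by rw [hdeg]; exact hd
  have hlen1 : ∀ i, 1 ≤ (p i).length := fun i => by rw [hk i]; omega
  have hwv : ∀ i, w i ≠ v := by
    intro i h
    have := getVert_inj (hpath i) 0 ((p i).length) (by omega) le_rfl
      (by rw [(p i).getVert_zero, (p i).getVert_length, h])
    have := hlen1 i
    omega
  have hvnotint : ∀ i t, 1 ≤ t → t ≤ k i → (p i).getVert t ≠ v := by
    intro i t ht1 ht2 h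
    have := getVert_inj (hpath i) t 0 (by rw [hk i]; omega) (by omega)
      (by rw [(p i).getVert_zero, h])
    omega
  have hintdeg : ∀ i t, 1 ≤ t → t ≤ k i → G.degree ((p i).getVert t) = 2 := by
    intro i t ht1 ht2
    exact internal_degree_two (hpath i) (hcond i) ht1 (by rw [hk i]; omega)
  have hwnotint : ∀ i j t, 1 ≤ t → t ≤ k j → (p j).getVert t ≠ w i := by
    intro i j t ht1 ht2 h
    have := hintdeg j t ht1 ht2
    rw [h] at this
    have := hdegw i
    omega
  have hcoin : ∀ i j, (p i).getVert 1 = (p j).getVert 1 →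
      (p i).support = (p j).support := fun i j h =>
    coincide (p i) (p j) (hpath i) (hpath j) (hdegw i) (hdegw j) (hcond i) (hcond j)
      (hlen1 i) (hlen1 j) h
  have hsnd : ∀ i j, i ≠ j → (p i).getVert 1 ≠ (p j).getVert 1 :=
    fun i j hij h => hdist i j hij (hcoin i j h)
  -- every neighbour of v is the second vertex of some string
  have hnbr : ∀ y, G.Adj v y → ∃ i, (p i).getVert 1 = y := by
    intro y hy
    have hinj : Function.Injective (fun i : Fin d => (p i).getVert 1) := by
      intro i j h
      by_contra hne
      exact hsnd i j hne h
    have himg : (Finset.univ.image (fun i : Fin d => (p i).getVert 1)) ⊆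
        G.neighborFinset v := by
      intro z hz
      rw [Finset.mem_image] at hz
      obtain ⟨i, _, rfl⟩ := hz
      rw [SimpleGraph.mem_neighborFinset]
      have := (p i).adj_getVert_succ (i := 0) (by have := hlen1 i; omega)
      rwa [(p i).getVert_zero] at this
    have hcard : (Finset.univ.image (fun i : Fin d => (p i).getVert 1)).card = d := by
      rw [Finset.card_image_of_injective _ hinj, Finset.card_univ, Fintype.card_fin]
    have heq : Finset.univ.image (fun i : Fin d => (p i).getVert 1) =
        G.neighborFinset v := by
      apply Finset.eq_of_subset_of_card_le himg
      rw [hcard]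
      exact le_of_eq hdeg
    have hyy : y ∈ G.neighborFinset v := by rw [SimpleGraph.mem_neighborFinset]; exact hy
    rw [← heq, Finset.mem_image] at hyy
    obtain ⟨i, _, hi⟩ := hyy
    exact ⟨i, hi⟩
  -- strings are internally disjoint
  have huniq : ∀ i j s t, 1 ≤ s → s ≤ k i → 1 ≤ t → t ≤ k j →
      (p i).getVert s = (p j).getVert t → i = j := by
    intro i j s t hs1 hs2 ht1 ht2 hst
    by_contra hij
    have hxv : (p i).getVert s ≠ v := hvnotint i s hs1 hs2
    have hxwi : (p i).getVert s ≠ w i := hwnotint i i s hs1 hs2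
    have hxwj : (p i).getVert s ≠ w j := by rw [hst]; exact hwnotint j j t ht1 ht2
    have hxmemj : (p i).getVert s ∈ (p j).support := by
      rw [hst]; exact getVert_mem_support _ t
    have hdeg2 : G.degree ((p i).getVert s) = 2 := hintdeg i s hs1 hs2
    obtain ⟨ri, si, hrip, hsip, hri1, hsi1, hrimem, hsimem, hriavoid, hsiavoid, hrsine, hisup⟩ :=
      split_string (hpath i) (getVert_mem_support (p i) s) hxv hxwi
    obtain ⟨rj, sj, hrjp, hsjp, hrj1, hsj1, hrjmem, hsjmem, hrjavoid, hsjavoid, hrsjne, hjsup⟩ :=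
      split_string (hpath j) hxmemj hxv hxwj
    have hadj_ri : G.Adj ((p i).getVert s) (ri.getVert 1) := by
      have := ri.adj_getVert_succ (i := 0) hri1
      rwa [ri.getVert_zero] at this
    have hadj_si : G.Adj ((p i).getVert s) (si.getVert 1) := by
      have := si.adj_getVert_succ (i := 0) hsi1
      rwa [si.getVert_zero] at this
    have hadj_rj : G.Adj ((p i).getVert s) (rj.getVert 1) := by
      have := rj.adj_getVert_succ (i := 0) hrj1
      rwa [rj.getVert_zero] at this
    have hadj_sj : G.Adj ((p i).getVert s) (sj.getVert 1) := by
      have := sj.adj_getVert_succ (i := 0) hsj1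
      rwa [sj.getVert_zero] at this
    -- internal degree conditions for the four pieces
    have hri_cond : ∀ y ∈ ri.support, y ≠ (p i).getVert s → y ≠ v → G.degree y = 2 := by
      intro y hy hyx hyv
      exact hcond i y (hrimem y hy) hyv (hriavoid y hy hyx)
    have hsi_cond : ∀ y ∈ si.support, y ≠ (p i).getVert s → y ≠ w i → G.degree y = 2 := by
      intro y hy hyx hyw
      exact hcond i y (hsimem y hy) (hsiavoid y hy hyx) hyw
    have hrj_cond : ∀ y ∈ rj.support, y ≠ (p i).getVert s → y ≠ v → G.degree y = 2 := by
      intro y hy hyx hyv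
      exact hcond j y (hrjmem y hy) hyv (hrjavoid y hy hyx)
    have hsj_cond : ∀ y ∈ sj.support, y ≠ (p i).getVert s → y ≠ w j → G.degree y = 2 := by
      intro y hy hyx hyw
      exact hcond j y (hsjmem y hy) (hsjavoid y hy hyx) hyw
    -- rj's second vertex is either ri's or si's
    have hnotmix : rj.getVert 1 ≠ si.getVert 1 := by
      intro hmix
      have hsupeq : rj.support = si.support :=
        coincide rj si hrjp hsip hdegv (hdegw i) hrj_cond hsi_cond hrj1 hsi1 hmix
      have hvmem : v ∈ si.support := by rw [← hsupeq]; exact rj.end_mem_support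
      exact (hsiavoid v hvmem (Ne.symm hxv)) rfl
    have hnotmix' : sj.getVert 1 ≠ ri.getVert 1 := by
      intro hmix
      have hsupeq : ri.support = sj.support :=
        coincide ri sj hrip hsjp hdegv (hdegw j) hri_cond hsj_cond hri1 hsj1 hmix.symm
      have hvmem : v ∈ sj.support := by rw [← hsupeq]; exact ri.end_mem_support
      exact (hsjavoid v hvmem (Ne.symm hxv)) rfl
    have hrr : rj.getVert 1 = ri.getVert 1 := by
      rcases two_nbrs hdeg2 hadj_ri hadj_si hrsine (rj.getVert 1) hadj_rj with h | h
      · exact h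
      · exact absurd h hnotmix
    have hss : sj.getVert 1 = si.getVert 1 := by
      rcases two_nbrs hdeg2 hadj_ri hadj_si hrsine (sj.getVert 1) hadj_sj with h | h
      · exact absurd h hnotmix'
      · exact h
    have hrsup : ri.support = rj.support :=
      coincide ri rj hrip hrjp hdegv hdegv hri_cond hrj_cond hri1 hrj1 hrr.symm
    have hssup : si.support = sj.support :=
      coincide si sj hsip hsjp (hdegw i) (hdegw j) hsi_cond hsj_cond hsi1 hsj1 hss.symm
    apply hdist i j hij
    rw [← hisup, ← hjsup, hrsup, hssup]
  -- Step 1 : every string has at most n - 3 internal vertices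
  have hk3 : ∀ i, k i + 2 ≤ n - 1 := by
    intro i0
    by_contra hbig
    have hki0 : n - 2 ≤ k i0 := by omega
    have hki01 : 1 ≤ k i0 := by omega
    set S : Set V := {x | ¬ ∃ t, 1 ≤ t ∧ t ≤ k i0 ∧ (p i0).getVert t = x} with hS
    have hx0 : (p i0).getVert 1 ∉ S := by
      intro h
      exact h ⟨1, le_rfl, hki01, rfl⟩
    obtain ⟨f0, hf0⟩ := exists_partial_hom G (cycleGraph n) hcrit S _ hx0 ⟨0, by omega⟩
    have hmem : f0 v ∈ goodSet n (f0 (w i0)) (k i0 + 1) := by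
      rw [goodSet_full hodd (by omega) (f0 (w i0))]
      exact Finset.mem_univ _
    obtain ⟨W, hWlen⟩ := goodSet_spec h3 hmem
    have hfun : ∀ x : V, ∃ c : Fin n, (x ∈ S → c = f0 x) ∧
        (∀ t, 1 ≤ t → t ≤ k i0 → x = (p i0).getVert t → c = W.getVert t) := by
      intro x
      by_cases hx : ∃ t, 1 ≤ t ∧ t ≤ k i0 ∧ (p i0).getVert t = x
      · obtain ⟨t, ht1, ht2, rfl⟩ := hx
        refine ⟨W.getVert t, ?_, ?_⟩
        · intro h
          exact absurd ⟨t, ht1, ht2, rfl⟩ h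
        · intro t' ht'1 ht'2 heq
          have htt : t' = t := getVert_inj (hpath i0) t' t
            (by rw [hk i0]; omega) (by rw [hk i0]; omega) heq.symm
          rw [htt]
      · refine ⟨f0 x, fun _ => rfl, ?_⟩
        intro t ht1 ht2 heq
        exact absurd ⟨t, ht1, ht2, heq.symm⟩ hx
    choose f hfS hfint using hfun
    have hvS : v ∈ S := by
      intro h
      obtain ⟨t', ht'1, ht'2, ht'3⟩ := h
      exact hvnotint i0 t' ht'1 ht'2 ht'3
    have hwS : w i0 ∈ S := by
      intro h
      obtain ⟨t', ht'1, ht'2, ht'3⟩ := h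
      exact hwnotint i0 i0 t' ht'1 ht'2 ht'3
    have claim : ∀ t, t ≤ (p i0).length → f ((p i0).getVert t) = W.getVert t := by
      intro t ht
      rcases Nat.eq_zero_or_pos t with rfl | ht1
      · rw [(p i0).getVert_zero, hfS v hvS]
        exact W.getVert_zero.symm
      · rcases Nat.lt_or_ge t ((p i0).length) with ht2 | ht2
        · have htk : t ≤ k i0 := by have := hk i0; omega
          exact hfint _ t ht1 htk rfl
        · have hteq : t = (p i0).length := by omega
          rw [hteq, (p i0).getVert_length, hfS _ hwS]
          rw [hk i0, ← hWlen, W.getVert_length]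
    have hhom : Nonempty (G →g cycleGraph n) := by
      apply glue (fun i => ⟨hpath i, hcond i⟩) k hk {i0} f
      · intro i hi t ht
        rw [Finset.mem_singleton] at hi
        subst hi
        rw [claim t (le_of_lt ht), claim (t + 1) ht]
        exact W.adj_getVert_succ (by rw [hWlen, ← hk i]; exact ht)
      · intro x y hadj hxn hyn
        have hxS : x ∈ S := hxn i0 (Finset.mem_singleton_self i0)
        have hyS : y ∈ S := hyn i0 (Finset.mem_singleton_self i0)
        rw [hfS x hxS, hfS y hyS]
        exact hf0 hadj hxS hyS
    exact hcrit.1 hhom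
  -- Step 2 : the main counting argument
  by_contra hcon
  push_neg at hcon
  set S : Set V := {x | x ≠ v ∧ ¬ ∃ i t, 1 ≤ t ∧ t ≤ k i ∧ (p i).getVert t = x} with hS
  have hvS : v ∉ S := fun h => h.1 rfl
  obtain ⟨f0, hf0⟩ := exists_partial_hom G (cycleGraph n) hcrit S v hvS ⟨0, by omega⟩
  set m : Fin d → ℕ := fun i => n - (k i + 2) with hm
  have hsummZ : (∑ i, (m i : ℤ)) = (n - 2) * d - ∑ i, (k i : ℤ) := by
    have hmi : ∀ i, (m i : ℤ) = (n : ℤ) - 2 - (k i : ℤ) := by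
      intro i
      rw [hm]
      have := hk3 i
      push_cast [Nat.cast_sub (by omega : k i + 2 ≤ n)]
      ring
    rw [Finset.sum_congr rfl (fun i _ => hmi i), Finset.sum_sub_distrib,
      Finset.sum_const, Finset.card_univ, Fintype.card_fin]
    push_cast
    ring
  have hsumm : (∑ i, m i) < n := by
    have h1 : (∑ i, (m i : ℤ)) < n := by rw [hsummZ]; omega
    have h2 : ((∑ i, m i : ℕ) : ℤ) = ∑ i, (m i : ℤ) := by push_cast; rfl
    omega
  set bad : Finset (Fin n) :=
    Finset.univ.biUnion (fun i : Fin d => (goodSet n (f0 (w i)) (k i + 1))ᶜ) with hbad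
  have hbadcard : bad.card < n := by
    calc bad.card ≤ ∑ i, ((goodSet n (f0 (w i)) (k i + 1))ᶜ).card :=
          Finset.card_biUnion_le
      _ = ∑ i, m i := by
          apply Finset.sum_congr rfl
          intro i _
          rw [Finset.card_compl, goodSet_card hodd, Fintype.card_fin, hm]
          have := hk3 i
          congr 1
          omega
      _ < n := hsumm
  have hex : ∃ a : Fin n, ∀ i, a ∈ goodSet n (f0 (w i)) (k i + 1) := by
    by_contra hno
    push_neg at hno
    have : bad = Finset.univ := by
      apply Finset.eq_univ_of_forall
      intro a
      obtain ⟨i, hi⟩ := hno a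
      rw [hbad, Finset.mem_biUnion]
      exact ⟨i, Finset.mem_univ i, Finset.mem_compl.mpr hi⟩
    rw [this, Finset.card_univ, Fintype.card_fin] at hbadcard
    omega
  obtain ⟨a, ha⟩ := hex
  have hW : ∀ i, ∃ W : (cycleGraph n).Walk a (f0 (w i)), W.length = k i + 1 :=
    fun i => goodSet_spec h3 (ha i)
  choose W hWlen using hW
  have hfun : ∀ x : V, ∃ c : Fin n, (x = v → c = a) ∧ (x ∈ S → c = f0 x) ∧
      (∀ i t, 1 ≤ t → t ≤ k i → x = (p i).getVert t → c = (W i).getVert t) := by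
    intro x
    by_cases hx : ∃ i t, 1 ≤ t ∧ t ≤ k i ∧ (p i).getVert t = x
    · obtain ⟨i, t, ht1, ht2, rfl⟩ := hx
      refine ⟨(W i).getVert t, ?_, ?_, ?_⟩
      · intro h
        exact absurd h (hvnotint i t ht1 ht2)
      · intro h
        exact absurd ⟨i, t, ht1, ht2, rfl⟩ h.2
      · intro j t' ht'1 ht'2 heq
        have hji : j = i := huniq j i t' t ht'1 ht'2 ht1 ht2 heq.symm
        subst hji
        have htt : t' = t :=
          getVert_inj (hpath j) t' t (by rw [hk j]; omega) (by rw [hk j]; omega) heq.symm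
        rw [htt]
    · by_cases hxv : x = v
      · subst hxv
        refine ⟨a, fun _ => rfl, fun h => absurd rfl h.1, ?_⟩
        intro i t ht1 ht2 heq
        exact absurd heq.symm (hvnotint i t ht1 ht2)
      · refine ⟨f0 x, fun h => absurd h hxv, fun _ => rfl, ?_⟩
        intro i t ht1 ht2 heq
        exact absurd ⟨i, t, ht1, ht2, heq.symm⟩ hx
  choose f hfv hfS hfint using hfun
  have claim : ∀ i t, t ≤ (p i).length → f ((p i).getVert t) = (W i).getVert t := by
    intro i t ht
    rcases Nat.eq_zero_or_pos t with rfl | ht1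
    · rw [(p i).getVert_zero, hfv v rfl]
      exact ((W i).getVert_zero).symm
    · rcases Nat.lt_or_ge t ((p i).length) with ht2 | ht2
      · have htk : t ≤ k i := by have := hk i; omega
        exact hfint _ i t ht1 htk rfl
      · have hteq : t = (p i).length := by omega
        have hwS : w i ∈ S := by
          constructor
          · exact hwv i
          · rintro ⟨j, t', ht'1, ht'2, ht'3⟩
            exact hwnotint i j t' ht'1 ht'2 ht'3
        rw [hteq, (p i).getVert_length, hfS _ hwS]
        rw [hk i, ← hWlen i, (W i).getVert_length]
  have hhom : Nonempty (G →g cycleGraph n) := by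
    apply glue (fun i => ⟨hpath i, hcond i⟩) k hk Finset.univ f
    · intro i _ t ht
      rw [claim i t (le_of_lt ht), claim i (t + 1) ht]
      exact (W i).adj_getVert_succ (by rw [hWlen i, ← hk i]; exact ht)
    · intro x y hadj hxn hyn
      by_cases hxv : x = v
      · subst hxv
        obtain ⟨i, hi⟩ := hnbr y hadj
        have hki : k i = 0 := by
          by_contra hne
          exact (hyn i (Finset.mem_univ i)) ⟨1, le_rfl, by omega, hi⟩
        have h0 : f x = (W i).getVert 0 := by
          rw [← (p i).getVert_zero]
          exact claim i 0 (by omega)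
        have h1 : f y = (W i).getVert 1 := by
          rw [← hi]
          exact claim i 1 (by rw [hk i]; omega)
        rw [h0, h1]
        exact (W i).adj_getVert_succ (by rw [hWlen i]; omega)
      · by_cases hyv : y = v
        · subst hyv
          obtain ⟨i, hi⟩ := hnbr x hadj.symm
          have hki : k i = 0 := by
            by_contra hne
            exact (hxn i (Finset.mem_univ i)) ⟨1, le_rfl, by omega, hi⟩
          have h0 : f y = (W i).getVert 0 := by
            rw [← (p i).getVert_zero]
            exact claim i 0 (by omega)
          have h1 : f x = (W i).getVert 1 := by
            rw [← hi]
            exact claim i 1 (by rw [hk i]; omega)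
          rw [h0, h1]
          exact ((W i).adj_getVert_succ (by rw [hWlen i]; omega)).symm
        · have hxS : x ∈ S := ⟨hxv, by
            rintro ⟨i, t, ht1, ht2, ht3⟩
            exact (hxn i (Finset.mem_univ i)) ⟨t, ht1, ht2, ht3⟩⟩
          have hyS : y ∈ S := ⟨hyv, by
            rintro ⟨i, t, ht1, ht2, ht3⟩
            exact (hyn i (Finset.mem_univ i)) ⟨t, ht1, ht2, ht3⟩⟩
          rw [hfS x hxS, hfS y hyS]
          exact hf0 hadj hxS hyS
  exact hcrit.1 hhom
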